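/- Let d ≥ 2 be an integer, let v₁, v₂ ∈ ℝ^d with r := |v₁ − v₂| > 0, and define the binary transition map J : ℝ^d → ℝ^d by J(ω) = r^{-1}((v₁ − v₂) + 2⟨ω, v₂ − v₁⟩ω). Then J is differentiable at every ω ∈ ℝ^d, the determinant of its derivative satisfies det DJ(ω) = 2^{d+1} r^{-d} ⟨ω, v₂ − v₁⟩^d; in particular det DJ(ω) > 0 whenever ⟨ω, v₂ − v₁⟩ > 0. Moreover, the operator norm of DJ(ω) is at most 4|ω| (hence at most 8 for |ω| ≤ 2), uniformly in v₁, v₂ and r. -/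

import Mathlib

open MeasureTheory

/-- The binary transition map `J(ω) = r⁻¹ ((v₁ − v₂) + 2⟨ω, v₂ − v₁⟩ ω)`, where `r = |v₁ − v₂|`. -/
noncomputable def transJ {d : ℕ} (v₁ v₂ : EuclideanSpace ℝ (Fin d)) :
    EuclideanSpace ℝ (Fin d) → EuclideanSpace ℝ (Fin d) :=
  fun ω => ‖v₁ - v₂‖⁻¹ • ((v₁ - v₂) + (2 * (inner ℝ ω (v₂ - v₁) : ℝ)) • ω)

section auxiliary

open Matrix

/-- Determinant of a scalar multiple of the identity plus a rank-one matrix. -/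
lemma aux_det_smul_one_add_colrow {d : ℕ} (hd : 2 ≤ d) (a : ℝ) (u v : Fin d → ℝ) :
    Matrix.det (a • (1 : Matrix (Fin d) (Fin d) ℝ) + Matrix.replicateCol Unit u * Matrix.replicateRow Unit v)
      = a ^ (d - 1) * (a + v ⬝ᵥ u) := by
  rcases eq_or_ne a 0 with rfl | ha
  · simp only [zero_smul, zero_add]
    rw [zero_pow (by omega : d - 1 ≠ 0), zero_mul]
    rw [← Matrix.exists_mulVec_eq_zero_iff]
    set j0 : Fin d := ⟨0, by omega⟩ with hj0
    set j1 : Fin d := ⟨1, by omega⟩ with hj1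
    have h01 : j0 ≠ j1 := by simp [hj0, hj1, Fin.ext_iff]
    obtain ⟨x, hx0, hxv⟩ : ∃ x : Fin d → ℝ, x ≠ 0 ∧ v ⬝ᵥ x = 0 := by
      by_cases hv : v j0 = 0
      · refine ⟨Pi.single j0 1, ?_, ?_⟩
        · intro h
          have := congrFun h j0
          simp at this
        · simp [dotProduct_single, hv]
      · refine ⟨v j1 • (Pi.single j0 1 : Fin d → ℝ) - v j0 • (Pi.single j1 1 : Fin d → ℝ),
          ?_, ?_⟩
        · intro h
          have := congrFun h j1
          simp [Pi.single_apply, h01, h01.symm] at this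
          exact hv this
        · simp [dotProduct_sub, dotProduct_smul, dotProduct_single]
          ring
    refine ⟨x, hx0, ?_⟩
    rw [← Matrix.mulVec_mulVec]
    have : Matrix.replicateRow Unit v *ᵥ x = 0 := by
      funext i
      simpa [Matrix.mulVec, Matrix.replicateRow_apply, dotProduct] using hxv
    rw [this, Matrix.mulVec_zero]
  · have key : a • (1 : Matrix (Fin d) (Fin d) ℝ) + Matrix.replicateCol Unit u * Matrix.replicateRow Unit v
        = a • ((1 : Matrix (Fin d) (Fin d) ℝ) + Matrix.replicateCol Unit (a⁻¹ • u) * Matrix.replicateRow Unit v) := by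
      rw [← Matrix.vecMulVec_eq, ← Matrix.vecMulVec_eq]
      ext i j
      simp only [Matrix.add_apply, Matrix.smul_apply, Matrix.vecMulVec_apply, Pi.smul_apply,
        smul_eq_mul]
      field_simp
    rw [key, Matrix.det_smul, Matrix.det_one_add_replicateCol_mul_replicateRow, Fintype.card_fin,
      dotProduct_smul, smul_eq_mul]
    have hd1 : d - 1 + 1 = d := by omega
    have hpow : a ^ d = a ^ (d - 1) * a := by rw [← pow_succ, hd1]
    have h2 : a * (1 + a⁻¹ * (v ⬝ᵥ u)) = a + v ⬝ᵥ u := by field_simp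
    rw [hpow, mul_assoc, h2]

/-- The derivative of the binary transition map. -/
noncomputable def transDeriv {d : ℕ} (v₁ v₂ ω : EuclideanSpace ℝ (Fin d)) :
    EuclideanSpace ℝ (Fin d) →L[ℝ] EuclideanSpace ℝ (Fin d) :=
  ‖v₁ - v₂‖⁻¹ • ((2 * (inner ℝ ω (v₂ - v₁) : ℝ)) •
      ContinuousLinearMap.id ℝ (EuclideanSpace ℝ (Fin d)) +
    ((2 : ℝ) • (innerSL ℝ (v₂ - v₁))).smulRight ω)

lemma transJ_hasFDerivAt {d : ℕ} (v₁ v₂ ω : EuclideanSpace ℝ (Fin d)) :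
    HasFDerivAt (transJ v₁ v₂) (transDeriv v₁ v₂ ω) ω := by
  have h0 : HasFDerivAt (fun y : EuclideanSpace ℝ (Fin d) => (inner ℝ y (v₂ - v₁) : ℝ))
      (innerSL ℝ (v₂ - v₁)) ω := by
    have h := (innerSL ℝ (v₂ - v₁)).hasFDerivAt (x := ω)
    exact h.congr_of_eventuallyEq (Filter.Eventually.of_forall fun y => by
      rw [innerSL_apply_apply, real_inner_comm])
  have h1 := h0.const_mul (2 : ℝ)
  have h2 := h1.smul (hasFDerivAt_id ω)
  have h3 := (h2.const_add (v₁ - v₂)).const_smul (‖v₁ - v₂‖⁻¹)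
  exact h3

lemma det_transDeriv {d : ℕ} (hd : 2 ≤ d) (v₁ v₂ : EuclideanSpace ℝ (Fin d)) (hne : v₁ ≠ v₂)
    (ω : EuclideanSpace ℝ (Fin d)) :
    LinearMap.det (transDeriv v₁ v₂ ω).toLinearMap =
      2 ^ (d + 1) * (inner ℝ ω (v₂ - v₁) : ℝ) ^ d / ‖v₁ - v₂‖ ^ d := by
  have hr : (0 : ℝ) < ‖v₁ - v₂‖ := by
    rw [norm_pos_iff]
    exact sub_ne_zero.mpr hne
  set s : ℝ := (inner ℝ ω (v₂ - v₁) : ℝ) with hs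
  let b := (EuclideanSpace.basisFun (Fin d) ℝ).toBasis
  rw [← LinearMap.det_toMatrix b]
  have hM : LinearMap.toMatrix b b (transDeriv v₁ v₂ ω).toLinearMap
      = ‖v₁ - v₂‖⁻¹ • ((2 * s) • (1 : Matrix (Fin d) (Fin d) ℝ)
          + Matrix.replicateCol Unit (fun i => ω i) * Matrix.replicateRow Unit (fun j => 2 * (v₂ - v₁) j)) := by
    ext i j
    rw [LinearMap.toMatrix_apply]
    rw [← Matrix.vecMulVec_eq]
    simp only [ContinuousLinearMap.coe_coe, transDeriv, ContinuousLinearMap.smul_apply,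
      ContinuousLinearMap.add_apply, ContinuousLinearMap.coe_smul', Pi.smul_apply,
      ContinuousLinearMap.coe_id', id_eq, ContinuousLinearMap.smulRight_apply,
      innerSL_apply_apply, Matrix.smul_apply, Matrix.add_apply, Matrix.vecMulVec_apply,
      OrthonormalBasis.coe_toBasis, OrthonormalBasis.coe_toBasis_repr_apply,
      EuclideanSpace.basisFun_apply, EuclideanSpace.basisFun_repr, smul_eq_mul]
    have hsingle : (inner ℝ (v₂ - v₁) (EuclideanSpace.single j (1:ℝ)) : ℝ) = (v₂ - v₁) j := by
      rw [EuclideanSpace.inner_single_right]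
      simp
    have hbj : b j = EuclideanSpace.single j (1:ℝ) := by
      simp [b, EuclideanSpace.basisFun_apply]
    have hrep : ∀ (x : EuclideanSpace ℝ (Fin d)) (k : Fin d), b.repr x k = x k := fun x k => by
      simp [b, OrthonormalBasis.coe_toBasis_repr_apply, EuclideanSpace.basisFun_repr]
    rw [_root_.map_smul, map_add, _root_.map_smul, _root_.map_smul, hbj, hsingle]
    simp only [Finsupp.coe_smul, Finsupp.coe_add, Pi.smul_apply, Pi.add_apply, smul_eq_mul]
    rw [hrep, hrep]
    simp only [EuclideanSpace.single_apply, Matrix.one_apply]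
    rcases eq_or_ne i j with rfl | hij
    · rw [← hs]; ring
    · rw [← hs]; ring
  rw [hM, Matrix.det_smul, aux_det_smul_one_add_colrow hd, Fintype.card_fin]
  have hdot : (fun j => 2 * (v₂ - v₁) j) ⬝ᵥ (fun i => ω i) = 2 * s := by
    simp only [dotProduct, hs, PiLp.inner_apply, RCLike.inner_apply, conj_trivial]
    rw [Finset.mul_sum]
    congr 1; funext i; ring
  rw [hdot]
  have hd1 : d - 1 + 1 = d := by omega
  have key2 : (2 * s) ^ (d - 1) * (2 * s + 2 * s) = 2 ^ (d + 1) * s ^ d := by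
    have h1 : (2 * s) ^ (d - 1) * (2 * s + 2 * s) = (2 * s) ^ (d - 1) * (2 * s) * 2 := by ring
    rw [h1, ← pow_succ, hd1, mul_pow, pow_succ]
    ring
  rw [key2, inv_pow, div_eq_mul_inv]
  ring

lemma norm_transDeriv_le {d : ℕ} (v₁ v₂ : EuclideanSpace ℝ (Fin d)) (hne : v₁ ≠ v₂)
    (ω : EuclideanSpace ℝ (Fin d)) : ‖transDeriv v₁ v₂ ω‖ ≤ 4 * ‖ω‖ := by
  have hr : (0 : ℝ) < ‖v₁ - v₂‖ := by
    rw [norm_pos_iff]; exact sub_ne_zero.mpr hne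
  have hw : ‖v₂ - v₁‖ = ‖v₁ - v₂‖ := norm_sub_rev _ _
  refine ContinuousLinearMap.opNorm_le_bound _ (by positivity) fun x => ?_
  have happ : transDeriv v₁ v₂ ω x
      = ‖v₁ - v₂‖⁻¹ • ((2 * (inner ℝ ω (v₂ - v₁) : ℝ)) • x
          + (2 * (inner ℝ (v₂ - v₁) x : ℝ)) • ω) := by
    simp only [transDeriv, ContinuousLinearMap.smul_apply, ContinuousLinearMap.add_apply,
      ContinuousLinearMap.coe_id', id_eq, ContinuousLinearMap.smulRight_apply,
      innerSL_apply_apply, smul_eq_mul]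
  rw [happ, norm_smul, norm_inv, norm_norm]
  have h1 : ‖(2 * (inner ℝ ω (v₂ - v₁) : ℝ)) • x + (2 * (inner ℝ (v₂ - v₁) x : ℝ)) • ω‖
      ≤ 2 * (‖ω‖ * ‖v₁ - v₂‖) * ‖x‖ + 2 * (‖v₁ - v₂‖ * ‖x‖) * ‖ω‖ := by
    refine (norm_add_le _ _).trans ?_
    rw [norm_smul, norm_smul]
    have ha : ‖(2 * (inner ℝ ω (v₂ - v₁) : ℝ))‖ ≤ 2 * (‖ω‖ * ‖v₁ - v₂‖) := by
      rw [norm_mul, Real.norm_ofNat]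
      have := abs_real_inner_le_norm ω (v₂ - v₁)
      rw [hw] at this
      exact mul_le_mul_of_nonneg_left this (by norm_num)
    have hb : ‖(2 * (inner ℝ (v₂ - v₁) x : ℝ))‖ ≤ 2 * (‖v₁ - v₂‖ * ‖x‖) := by
      rw [norm_mul, Real.norm_ofNat]
      have := abs_real_inner_le_norm (v₂ - v₁) x
      rw [hw] at this
      exact mul_le_mul_of_nonneg_left this (by norm_num)
    exact add_le_add (mul_le_mul_of_nonneg_right ha (norm_nonneg x))
      (mul_le_mul_of_nonneg_right hb (norm_nonneg ω))
  calc ‖v₁ - v₂‖⁻¹ * ‖(2 * (inner ℝ ω (v₂ - v₁) : ℝ)) • x + (2 * (inner ℝ (v₂ - v₁) x : ℝ)) • ω‖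
      ≤ ‖v₁ - v₂‖⁻¹ * (2 * (‖ω‖ * ‖v₁ - v₂‖) * ‖x‖ + 2 * (‖v₁ - v₂‖ * ‖x‖) * ‖ω‖) :=
        mul_le_mul_of_nonneg_left h1 (by positivity)
    _ = 4 * ‖ω‖ * ‖x‖ := by field_simp; ring

end auxiliary

theorem stmt_18 (d : ℕ) (hd : 2 ≤ d) (v₁ v₂ : EuclideanSpace ℝ (Fin d)) (hne : v₁ ≠ v₂) :
    -- `J` is differentiable everywhere
    (∀ ω : EuclideanSpace ℝ (Fin d), DifferentiableAt ℝ (transJ v₁ v₂) ω) ∧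
    -- the determinant of its derivative is `2^{d+1} r^{-d} ⟨ω, v₂ − v₁⟩^d`
    (∀ ω : EuclideanSpace ℝ (Fin d),
      LinearMap.det ((fderiv ℝ (transJ v₁ v₂) ω).toLinearMap) =
        2 ^ (d + 1) * (inner ℝ ω (v₂ - v₁) : ℝ) ^ d / ‖v₁ - v₂‖ ^ d) ∧
    -- in particular it is positive on precollisional directions
    (∀ ω : EuclideanSpace ℝ (Fin d), 0 < (inner ℝ ω (v₂ - v₁) : ℝ) →
      0 < LinearMap.det ((fderiv ℝ (transJ v₁ v₂) ω).toLinearMap)) ∧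
    -- the operator norm of the derivative is at most `4|ω|`, uniformly in `v₁, v₂, r`
    (∀ ω : EuclideanSpace ℝ (Fin d), ‖fderiv ℝ (transJ v₁ v₂) ω‖ ≤ 4 * ‖ω‖) ∧
    -- hence at most `8` for `|ω| ≤ 2`
    (∀ ω : EuclideanSpace ℝ (Fin d), ‖ω‖ ≤ 2 → ‖fderiv ℝ (transJ v₁ v₂) ω‖ ≤ 8) := by
  have hr : (0 : ℝ) < ‖v₁ - v₂‖ := by
    rw [norm_pos_iff]; exact sub_ne_zero.mpr hne
  have hfd : ∀ ω : EuclideanSpace ℝ (Fin d),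
      fderiv ℝ (transJ v₁ v₂) ω = transDeriv v₁ v₂ ω :=
    fun ω => (transJ_hasFDerivAt v₁ v₂ ω).fderiv
  refine ⟨fun ω => (transJ_hasFDerivAt v₁ v₂ ω).differentiableAt,
    fun ω => ?_, fun ω hω => ?_, fun ω => ?_, fun ω hω => ?_⟩
  · rw [hfd]
    exact det_transDeriv hd v₁ v₂ hne ω
  · rw [hfd, det_transDeriv hd v₁ v₂ hne ω]
    positivity
  · rw [hfd]
    exact norm_transDeriv_le v₁ v₂ hne ω
  · rw [hfd]
    have h := norm_transDeriv_le v₁ v₂ hne ω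
    nlinarith [norm_nonneg ω]
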